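/- For every constant loop c ∈ ℝ^N (i.e. x(t) ≡ c), one has 𝓛₁(c) ≤ γ₁/T, where γ₁ = 2π²( Σ_{i=1}^N α_i ℓ_i² v_i² + Σ_{1≤i<j≤N, v_i = v_j} 2 α_j ℓ_i ℓ_j v_i v_j ). -/

import Mathlib

open MeasureTheory Real Finset Filter

/-- α_j = Σ_{s=j}^N m_s -/
noncomputable def alphaC {N : ℕ} (m : Fin N → ℝ) (j : Fin N) : ℝ :=
  ∑ s ∈ Finset.univ.filter (fun s => j ≤ s), m s

/-- β_j = α_j ℓ_j -/
noncomputable def betaC {N : ℕ} (m ℓ : Fin N → ℝ) (j : Fin N) : ℝ :=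
  alphaC m j * ℓ j

/-- The kinetic form A(q)p·p of the planar N-pendulum. -/
noncomputable def kinForm {N : ℕ} (m ℓ : Fin N → ℝ) (q p : Fin N → ℝ) : ℝ :=
  (∑ i, alphaC m i * ℓ i ^ 2 * p i ^ 2) +
    ∑ i, ∑ j ∈ Finset.univ.filter (fun j => i < j),
      2 * alphaC m j * ℓ i * ℓ j * Real.cos (q i - q j) * (p i * p j)

/-- The potential V(q) = g Σ β_j cos q_j. -/
noncomputable def potV {N : ℕ} (m ℓ : Fin N → ℝ) (g : ℝ) (q : Fin N → ℝ) : ℝ :=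
  g * ∑ j, betaC m ℓ j * Real.cos (q j)

lemma keyI (a T : ℝ) (hT : T ≠ 0) (k : ℤ) :
    ∫ t in (0:ℝ)..T, Real.cos (a + (2*π*(k:ℝ)/T) * t)
      = if k = 0 then T * Real.cos a else 0 := by
  rcases eq_or_ne k 0 with hk | hk
  · simp [hk, mul_comm]
  · rw [if_neg hk]
    have hk' : (k:ℝ) ≠ 0 := Int.cast_ne_zero.mpr hk
    have hb : (2*π*(k:ℝ)/T) ≠ 0 :=
      div_ne_zero (mul_ne_zero (mul_ne_zero two_ne_zero Real.pi_ne_zero) hk') hT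
    have h := intervalIntegral.integral_comp_mul_add (a := 0) (b := T) Real.cos hb a
    simp only [mul_zero, zero_add] at h
    have harg : ∀ t : ℝ, a + (2*π*(k:ℝ)/T) * t = (2*π*(k:ℝ)/T) * t + a := fun t => add_comm _ _
    simp only [harg]
    rw [h, integral_cos]
    have : (2*π*(k:ℝ)/T) * T + a = a + (k:ℝ) * (2*π) := by field_simp; ring
    rw [this, Real.sin_add_int_mul_two_pi, sub_self, smul_zero]

theorem stmt_2 (N : ℕ) (hN : 1 ≤ N) (m ℓ : Fin N → ℝ)
    (hm : ∀ i, 0 < m i) (hl : ∀ i, 0 < ℓ i)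
    (T : ℝ) (hT : 0 < T) (v : Fin N → ℤ) (c : Fin N → ℝ) :
    (1 / 2) * ∫ t in (0:ℝ)..T,
        kinForm m ℓ (fun i => c i + 2 * π * (v i : ℝ) * t / T)
          (fun i => 2 * π * (v i : ℝ) / T)
      ≤ (2 * π ^ 2 * ((∑ i, alphaC m i * ℓ i ^ 2 * (v i : ℝ) ^ 2)
          + ∑ i, ∑ j ∈ Finset.univ.filter (fun j => i < j ∧ v i = v j),
              2 * alphaC m j * ℓ i * ℓ j * (v i : ℝ) * (v j : ℝ))) / T := by
  have hT' : T ≠ 0 := ne_of_gt hT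
  have halpha : ∀ j, 0 < alphaC m j := fun j =>
    Finset.sum_pos (fun s _ => hm s) ⟨j, by simp⟩
  set C : ℝ := ∑ i, alphaC m i * ℓ i ^ 2 * (2 * π * (v i : ℝ) / T) ^ 2 with hC
  -- per-pair integrals
  have hij : ∀ i j : Fin N,
      (∫ t in (0:ℝ)..T, 2 * alphaC m j * ℓ i * ℓ j *
          Real.cos ((c i + 2 * π * (v i : ℝ) * t / T) - (c j + 2 * π * (v j : ℝ) * t / T)) *
          ((2 * π * (v i : ℝ) / T) * (2 * π * (v j : ℝ) / T)))
        = (2 * alphaC m j * ℓ i * ℓ j * ((2 * π * (v i : ℝ) / T) * (2 * π * (v j : ℝ) / T))) *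
            (if v i = v j then T * Real.cos (c i - c j) else 0) := by
    intro i j
    have hF : (fun t : ℝ => 2 * alphaC m j * ℓ i * ℓ j *
          Real.cos ((c i + 2 * π * (v i : ℝ) * t / T) - (c j + 2 * π * (v j : ℝ) * t / T)) *
          ((2 * π * (v i : ℝ) / T) * (2 * π * (v j : ℝ) / T)))
        = fun t : ℝ => (2 * alphaC m j * ℓ i * ℓ j *
            ((2 * π * (v i : ℝ) / T) * (2 * π * (v j : ℝ) / T))) *
            Real.cos ((c i - c j) + (2 * π * ((v i - v j : ℤ) : ℝ) / T) * t) := by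
      funext t
      have harg : (c i + 2 * π * (v i : ℝ) * t / T) - (c j + 2 * π * (v j : ℝ) * t / T)
          = (c i - c j) + (2 * π * ((v i - v j : ℤ) : ℝ) / T) * t := by
        push_cast; ring
      rw [harg]; ring
    rw [hF, intervalIntegral.integral_const_mul, keyI _ _ hT']
    congr 1
    simp [sub_eq_zero]
  -- integrability of cross terms
  have hcont : ∀ i j : Fin N, Continuous (fun t : ℝ => 2 * alphaC m j * ℓ i * ℓ j *
      Real.cos ((c i + 2 * π * (v i : ℝ) * t / T) - (c j + 2 * π * (v j : ℝ) * t / T)) *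
      ((2 * π * (v i : ℝ) / T) * (2 * π * (v j : ℝ) / T))) := by
    intro i j; fun_prop
  have hii : ∀ i : Fin N, IntervalIntegrable (fun t : ℝ =>
      ∑ j ∈ Finset.univ.filter (fun j => i < j),
        2 * alphaC m j * ℓ i * ℓ j *
          Real.cos ((c i + 2 * π * (v i : ℝ) * t / T) - (c j + 2 * π * (v j : ℝ) * t / T)) *
          ((2 * π * (v i : ℝ) / T) * (2 * π * (v j : ℝ) / T))) volume 0 T := by
    intro i
    exact (continuous_finset_sum _ (fun j _ => hcont i j)).intervalIntegrable 0 T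
  have h2 : IntervalIntegrable (fun t : ℝ =>
      ∑ i, ∑ j ∈ Finset.univ.filter (fun j => i < j),
        2 * alphaC m j * ℓ i * ℓ j *
          Real.cos ((c i + 2 * π * (v i : ℝ) * t / T) - (c j + 2 * π * (v j : ℝ) * t / T)) *
          ((2 * π * (v i : ℝ) / T) * (2 * π * (v j : ℝ) / T))) volume 0 T := by
    exact (continuous_finset_sum _ (fun i _ => by
      exact continuous_finset_sum _ (fun j _ => hcont i j))).intervalIntegrable 0 T
  have h1 : IntervalIntegrable (fun _ : ℝ => C) volume 0 T := intervalIntegrable_const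
  have hmain : (∫ t in (0:ℝ)..T,
        kinForm m ℓ (fun i => c i + 2 * π * (v i : ℝ) * t / T)
          (fun i => 2 * π * (v i : ℝ) / T))
      = T * C + ∑ i, ∑ j ∈ Finset.univ.filter (fun j => i < j),
          (2 * alphaC m j * ℓ i * ℓ j * ((2 * π * (v i : ℝ) / T) * (2 * π * (v j : ℝ) / T))) *
            (if v i = v j then T * Real.cos (c i - c j) else 0) := by
    simp only [kinForm]
    rw [intervalIntegral.integral_add h1 h2, intervalIntegral.integral_const]
    rw [intervalIntegral.integral_finset_sum (fun i _ => hii i)]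
    rw [sub_zero, smul_eq_mul]
    congr 1
    refine Finset.sum_congr rfl fun i _ => ?_
    rw [intervalIntegral.integral_finset_sum (fun j _ => (hcont i j).intervalIntegrable 0 T)]
    exact Finset.sum_congr rfl fun j _ => hij i j
  rw [hmain]
  -- algebra
  have hTD : T * C = (4 * π ^ 2 / T) * (∑ i, alphaC m i * ℓ i ^ 2 * (v i : ℝ) ^ 2) := by
    rw [hC, Finset.mul_sum, Finset.mul_sum]
    refine Finset.sum_congr rfl fun i _ => ?_
    field_simp; ring
  have hcross : ∀ i : Fin N,
      ∑ j ∈ Finset.univ.filter (fun j => i < j),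
        (2 * alphaC m j * ℓ i * ℓ j * ((2 * π * (v i : ℝ) / T) * (2 * π * (v j : ℝ) / T))) *
          (if v i = v j then T * Real.cos (c i - c j) else 0)
      ≤ ∑ j ∈ Finset.univ.filter (fun j => i < j ∧ v i = v j),
          (4 * π ^ 2 / T) * (2 * alphaC m j * ℓ i * ℓ j * (v i : ℝ) * (v j : ℝ)) := by
    intro i
    rw [Finset.sum_filter, Finset.sum_filter]
    refine Finset.sum_le_sum fun j _ => ?_
    by_cases hij' : i < j
    · by_cases hv : v i = v j
      · rw [if_pos hij', if_pos hv, if_pos (show i < j ∧ v i = v j from ⟨hij', hv⟩)]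
        have hvv : 0 ≤ (v i : ℝ) * (v j : ℝ) := by
          rw [hv]; exact mul_self_nonneg _
        have hA : 0 ≤ (4 * π ^ 2 / T) * (2 * alphaC m j * ℓ i * ℓ j * (v i : ℝ) * (v j : ℝ)) := by
          have := (halpha j).le
          have := (hl i).le
          have := (hl j).le
          have h4 : (0:ℝ) ≤ 4 * π ^ 2 / T := by positivity
          nlinarith [mul_nonneg (mul_nonneg (mul_nonneg (halpha j).le (hl i).le) (hl j).le) hvv, h4]
        calc (2 * alphaC m j * ℓ i * ℓ j * ((2 * π * (v i : ℝ) / T) * (2 * π * (v j : ℝ) / T))) *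
              (T * Real.cos (c i - c j))
            = ((4 * π ^ 2 / T) * (2 * alphaC m j * ℓ i * ℓ j * (v i : ℝ) * (v j : ℝ))) *
                Real.cos (c i - c j) := by field_simp; ring
          _ ≤ ((4 * π ^ 2 / T) * (2 * alphaC m j * ℓ i * ℓ j * (v i : ℝ) * (v j : ℝ))) * 1 :=
              mul_le_mul_of_nonneg_left (Real.cos_le_one _) hA
          _ = (4 * π ^ 2 / T) * (2 * alphaC m j * ℓ i * ℓ j * (v i : ℝ) * (v j : ℝ)) := by ring
      · simp [hij', hv]
    · simp [hij']
  have hS : ∑ i, ∑ j ∈ Finset.univ.filter (fun j => i < j),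
        (2 * alphaC m j * ℓ i * ℓ j * ((2 * π * (v i : ℝ) / T) * (2 * π * (v j : ℝ) / T))) *
          (if v i = v j then T * Real.cos (c i - c j) else 0)
      ≤ (4 * π ^ 2 / T) * ∑ i, ∑ j ∈ Finset.univ.filter (fun j => i < j ∧ v i = v j),
          2 * alphaC m j * ℓ i * ℓ j * (v i : ℝ) * (v j : ℝ) := by
    rw [Finset.mul_sum]
    refine Finset.sum_le_sum fun i _ => ?_
    rw [Finset.mul_sum]
    exact hcross i
  have hfin : (1/2 : ℝ) * (T * C + ∑ i, ∑ j ∈ Finset.univ.filter (fun j => i < j),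
        (2 * alphaC m j * ℓ i * ℓ j * ((2 * π * (v i : ℝ) / T) * (2 * π * (v j : ℝ) / T))) *
          (if v i = v j then T * Real.cos (c i - c j) else 0))
      ≤ (1/2 : ℝ) * ((4 * π ^ 2 / T) * (∑ i, alphaC m i * ℓ i ^ 2 * (v i : ℝ) ^ 2)
          + (4 * π ^ 2 / T) * ∑ i, ∑ j ∈ Finset.univ.filter (fun j => i < j ∧ v i = v j),
              2 * alphaC m j * ℓ i * ℓ j * (v i : ℝ) * (v j : ℝ)) := by
    apply mul_le_mul_of_nonneg_left _ (by norm_num)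
    rw [← hTD]
    exact add_le_add le_rfl hS
  refine hfin.trans_eq ?_
  field_simp
  ring
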